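/- Let A ∈ C be nonzero with τ = -A² - A⁻². There exists a group homomorphism from the braid group B_3 = ⟨σ1, σ2 | σ1σ2σ1 = σ2σ1σ2⟩ to the group of units of TL_3 sending σ_i to A·1 + A⁻¹·e_i for i = 1, 2. -/
import Mathlib


noncomputable section

open scoped Classical

/-- Defining relations of the Temperley–Lieb algebra `TL₃` with parameter `τ`,
as a relation on the free associative `ℂ`-algebra on two generators. -/
inductive TLRel (τ : ℂ) : FreeAlgebra ℂ (Fin 2) → FreeAlgebra ℂ (Fin 2) → Prop
  | rel121 : TLRel τ (FreeAlgebra.ι ℂ 0 * FreeAlgebra.ι ℂ 1 * FreeAlgebra.ι ℂ 0) (FreeAlgebra.ι ℂ 0)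
  | rel212 : TLRel τ (FreeAlgebra.ι ℂ 1 * FreeAlgebra.ι ℂ 0 * FreeAlgebra.ι ℂ 1) (FreeAlgebra.ι ℂ 1)
  | rel11 : TLRel τ (FreeAlgebra.ι ℂ 0 * FreeAlgebra.ι ℂ 0) (τ • FreeAlgebra.ι ℂ 0)
  | rel22 : TLRel τ (FreeAlgebra.ι ℂ 1 * FreeAlgebra.ι ℂ 1) (τ • FreeAlgebra.ι ℂ 1)

/-- The Temperley–Lieb algebra `TL₃`. -/
abbrev TL3 (τ : ℂ) := RingQuot (TLRel τ)

/-- The generator `e₁` of `TL₃`. -/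
def e₁ (τ : ℂ) : TL3 τ := RingQuot.mkAlgHom ℂ (TLRel τ) (FreeAlgebra.ι ℂ 0)

/-- The generator `e₂` of `TL₃`. -/
def e₂ (τ : ℂ) : TL3 τ := RingQuot.mkAlgHom ℂ (TLRel τ) (FreeAlgebra.ι ℂ 1)

/-- The braid relation of `B₃` as a subset of the free group on two generators. -/
def braidRels : Set (FreeGroup (Fin 2)) :=
  {FreeGroup.of 0 * FreeGroup.of 1 * FreeGroup.of 0 *
    (FreeGroup.of 1 * FreeGroup.of 0 * FreeGroup.of 1)⁻¹}

/-- The braid group `B₃ = ⟨σ₁, σ₂ | σ₁σ₂σ₁ = σ₂σ₁σ₂⟩`. -/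
abbrev B3 := PresentedGroup braidRels

section aux
variable (τ : ℂ)

lemma h121 : e₁ τ * e₂ τ * e₁ τ = e₁ τ := by
  simp only [e₁, e₂, ← map_mul]
  exact RingQuot.mkAlgHom_rel ℂ TLRel.rel121

lemma h212 : e₂ τ * e₁ τ * e₂ τ = e₂ τ := by
  simp only [e₁, e₂, ← map_mul]
  exact RingQuot.mkAlgHom_rel ℂ TLRel.rel212

lemma h11 : e₁ τ * e₁ τ = τ • e₁ τ := by
  simp only [e₁, ← map_mul, ← map_smul]
  exact RingQuot.mkAlgHom_rel ℂ TLRel.rel11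

lemma h22 : e₂ τ * e₂ τ = τ • e₂ τ := by
  simp only [e₂, ← map_mul, ← map_smul]
  exact RingQuot.mkAlgHom_rel ℂ TLRel.rel22

end aux

/-- For `A ≠ 0`, `τ = -A² - A⁻²`, there is a group homomorphism from `B₃` to the units of
`TL₃` sending `σᵢ` to `A·1 + A⁻¹·eᵢ`. -/
theorem braid_to_TL3 (A : ℂ) (hA : A ≠ 0) (τ : ℂ) (hτ : τ = -A ^ 2 - A⁻¹ ^ 2) :
    ∃ φ : B3 →* (TL3 τ)ˣ,
      (φ (PresentedGroup.of 0) : TL3 τ) = A • (1 : TL3 τ) + A⁻¹ • e₁ τ ∧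
      (φ (PresentedGroup.of 1) : TL3 τ) = A • (1 : TL3 τ) + A⁻¹ • e₂ τ := by
  subst hτ
  set τ : ℂ := -A ^ 2 - A⁻¹ ^ 2 with hτ
  have key : ∀ e : TL3 τ, e * e = τ • e →
      (A • (1 : TL3 τ) + A⁻¹ • e) * (A⁻¹ • (1 : TL3 τ) + A • e) = 1 ∧
      (A⁻¹ • (1 : TL3 τ) + A • e) * (A • (1 : TL3 τ) + A⁻¹ • e) = 1 := by
    intro e he
    constructor <;>
    · simp only [mul_add, add_mul, smul_mul_assoc, mul_smul_comm, smul_smul, one_mul, mul_one, he]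
      rw [show (1 : TL3 τ) = (1 : ℂ) • (1 : TL3 τ) by simp]
      match_scalars <;> (try rw [hτ]) <;>
      first
      | ring1
      | linear_combination mul_inv_cancel₀ hA
      | linear_combination (-(A ^ 2 + A⁻¹ ^ 2)) * mul_inv_cancel₀ hA
      | linear_combination (-(A⁻¹ * (A ^ 2 + A⁻¹ ^ 2))) * mul_inv_cancel₀ hA
      | linear_combination (A⁻¹ * (A ^ 2 + A⁻¹ ^ 2)) * mul_inv_cancel₀ hA
  obtain ⟨i1, i1'⟩ := key (e₁ τ) (h11 τ)
  obtain ⟨i2, i2'⟩ := key (e₂ τ) (h22 τ)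
  set u1 : (TL3 τ)ˣ := ⟨A • 1 + A⁻¹ • e₁ τ, A⁻¹ • 1 + A • e₁ τ, i1, i1'⟩ with hu1
  set u2 : (TL3 τ)ˣ := ⟨A • 1 + A⁻¹ • e₂ τ, A⁻¹ • 1 + A • e₂ τ, i2, i2'⟩ with hu2
  have braid : u1 * u2 * u1 = u2 * u1 * u2 := by
    ext
    show (A • (1:TL3 τ) + A⁻¹ • e₁ τ) * (A • 1 + A⁻¹ • e₂ τ) * (A • 1 + A⁻¹ • e₁ τ)
       = (A • 1 + A⁻¹ • e₂ τ) * (A • 1 + A⁻¹ • e₁ τ) * (A • 1 + A⁻¹ • e₂ τ)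
    simp only [mul_add, add_mul, smul_mul_assoc, mul_smul_comm, smul_smul, one_mul, mul_one,
      h11, h22, h121, h212]
    match_scalars <;> (try rw [hτ]) <;>
      first
      | ring1
      | linear_combination mul_inv_cancel₀ hA
      | linear_combination (-(A ^ 2 + A⁻¹ ^ 2)) * mul_inv_cancel₀ hA
      | linear_combination (-(A⁻¹ * (A ^ 2 + A⁻¹ ^ 2))) * mul_inv_cancel₀ hA
      | linear_combination (A⁻¹ * (A ^ 2 + A⁻¹ ^ 2)) * mul_inv_cancel₀ hA
  let f : Fin 2 → (TL3 τ)ˣ := ![u1, u2]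
  have hrel : ∀ r ∈ braidRels, FreeGroup.lift f r = 1 := by
    intro r hr
    rcases hr with rfl
    simp only [map_mul, map_inv, FreeGroup.lift_apply_of, f]
    rw [show ((![u1, u2] : Fin 2 → (TL3 τ)ˣ) 0) = u1 from rfl,
        show ((![u1, u2] : Fin 2 → (TL3 τ)ˣ) 1) = u2 from rfl]
    rw [braid]
    group
  refine ⟨PresentedGroup.toGroup hrel, ?_, ?_⟩ <;>
    simp [PresentedGroup.toGroup.of, f, u1, u2]
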